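/- Suppose man m pushes up a set X of women below his DA partner without incurring regret and the DA matching changes (μ' ≠ μ). Then at least two distinct women are strictly better off under μ' than under μ, and at least two distinct men are strictly worse off under μ' than under μ. -/

import Mathlib

/-- A stable marriage profile: `M m` is man `m`'s ranking of women
(`M m k` = his `k`-th favorite woman), `W w` is woman `w`'s ranking of men. -/
structure Profile (n : ℕ) where
  M : Fin n → (Fin n ≃ Fin n)
  W : Fin n → (Fin n ≃ Fin n)

/-- Man `m` strictly prefers woman `w₁` to woman `w₂`. -/
def Profile.mpref {n : ℕ} (P : Profile n) (m w₁ w₂ : Fin n) : Prop :=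
  (P.M m).symm w₁ < (P.M m).symm w₂

/-- Woman `w` strictly prefers man `m₁` to man `m₂`. -/
def Profile.wpref {n : ℕ} (P : Profile n) (w m₁ m₂ : Fin n) : Prop :=
  (P.W w).symm m₁ < (P.W w).symm m₂

/-- State of the Gale–Shapley (deferred acceptance) algorithm:
`next m` is the rank of the next woman `m` will propose to, `wmatch w` is the man
currently (tentatively) held by woman `w`, `props` records all proposals made so far. -/
structure GSState (n : ℕ) where
  next : Fin n → ℕ
  wmatch : Fin n → Option (Fin n)
  props : List (Fin n × Fin n)

/-- Man `m` is currently not held by any woman. -/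
def isUnmatched {n : ℕ} (s : GSState n) (m : Fin n) : Bool :=
  decide (∀ w, s.wmatch w ≠ some m)

/-- One step of men-proposing deferred acceptance: the first unmatched man
proposes to the next woman on his list; she keeps her favorite proposer so far. -/
def GSstep {n : ℕ} (P : Profile n) (s : GSState n) : GSState n :=
  match (List.finRange n).find? (fun m => isUnmatched s m && decide (s.next m < n)) with
  | none => s
  | some m =>
    if h : s.next m < n then
      let w := P.M m ⟨s.next m, h⟩
      let s' : GSState n :=
        { next := Function.update s.next m (s.next m + 1),
          wmatch := s.wmatch,
          props := (m, w) :: s.props }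
      match s.wmatch w with
      | none => { s' with wmatch := Function.update s.wmatch w (some m) }
      | some m' =>
          if (P.W w).symm m < (P.W w).symm m' then
            { s' with wmatch := Function.update s.wmatch w (some m) }
          else s'
    else s

def GSinit (n : ℕ) : GSState n := ⟨fun _ => 0, fun _ => none, []⟩

/-- Run deferred acceptance to completion (at most `n*n` proposals occur). -/
def GSrun {n : ℕ} (P : Profile n) : GSState n := (GSstep P)^[n * n + 1] (GSinit n)

/-- The men-proposing deferred acceptance matching, as a map from men to women. -/
noncomputable def DA {n : ℕ} (P : Profile n) : Fin n → Fin n :=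
  fun m => if h : ∃ w, (GSrun P).wmatch w = some m then h.choose else m

/-- Man `m` proposes to woman `w` during the run of deferred acceptance on `P`. -/
def Proposes {n : ℕ} (P : Profile n) (m w : Fin n) : Prop :=
  (m, w) ∈ (GSrun P).props

/-- `(m, w)` is a blocking pair for the matching `μ` (men to women) w.r.t. profile `P`. -/
def Blocks {n : ℕ} (P : Profile n) (μ : Fin n → Fin n) (m w : Fin n) : Prop :=
  P.mpref m w (μ m) ∧ ∃ m', μ m' = w ∧ P.wpref w m m'

/-- `μ` is a stable matching with respect to profile `P`. -/
def Stable {n : ℕ} (P : Profile n) (μ : Fin n → Fin n) : Prop :=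
  Function.Bijective μ ∧ ∀ m w, ¬ Blocks P μ m w

/-- Replace man `m`'s preference list by `e`. -/
def Profile.updateM {n : ℕ} (P : Profile n) (m : Fin n) (e : Fin n ≃ Fin n) : Profile n :=
  { P with M := Function.update P.M m e }

/-- Replace woman `w`'s preference list by `e`. -/
def Profile.updateW {n : ℕ} (P : Profile n) (w : Fin n) (e : Fin n ≃ Fin n) : Profile n :=
  { P with W := Function.update P.W w e }

/-- The set of women ranked strictly above `w₀` in the list `e`. -/
def Above {n : ℕ} (e : Fin n ≃ Fin n) (w₀ : Fin n) : Set (Fin n) :=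
  {w | e.symm w < e.symm w₀}

/-- The set of women ranked strictly below `w₀` in the list `e`. -/
def Below {n : ℕ} (e : Fin n ≃ Fin n) (w₀ : Fin n) : Set (Fin n) :=
  {w | e.symm w₀ < e.symm w}

/-- `e'` is obtained from man `m`'s true list by pushing up the set `X` and pushing
down the set `Y` around the pivot `DA P m` (the order of women above and below
the pivot is immaterial, cf. Proposition 2 of the paper). -/
def PushUpDown {n : ℕ} (P : Profile n) (m : Fin n) (X Y : Set (Fin n))
    (e' : Fin n ≃ Fin n) : Prop :=
  Above e' (DA P m) = (Above (P.M m) (DA P m) ∪ X) \ Y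

/-- `e'` is obtained from `m`'s true list by pushing up the set `X` above `DA P m`. -/
def PushUp {n : ℕ} (P : Profile n) (m : Fin n) (X : Set (Fin n))
    (e' : Fin n ≃ Fin n) : Prop :=
  PushUpDown P m X ∅ e'

/-- `e'` is obtained from `m`'s true list by pushing down the set `Y` below `DA P m`. -/
def PushDown {n : ℕ} (P : Profile n) (m : Fin n) (Y : Set (Fin n))
    (e' : Fin n ≃ Fin n) : Prop :=
  PushUpDown P m ∅ Y e'

/-- Woman `w` is ranked below `DA P m` in `m`'s true list, and pushing her up
individually leaves `m`'s deferred acceptance partner unchanged (no regret). -/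
def NoRegretWoman {n : ℕ} (P : Profile n) (m w : Fin n) : Prop :=
  w ∈ Below (P.M m) (DA P m) ∧
    ∀ e' : Fin n ≃ Fin n, PushUp P m {w} e' → DA (P.updateM m e') m = DA P m

/-- The no-regret set `W^NR` of accomplice `m`. -/
def WNR {n : ℕ} (P : Profile n) (m : Fin n) : Set (Fin n) :=
  {w | NoRegretWoman P m w}


namespace GSProof

variable {n : ℕ}

/-- The invariant maintained by the Gale-Shapley algorithm. -/
structure Inv (P : Profile n) (s : GSState n) : Prop where
  next_le : ∀ m, s.next m ≤ n
  matched_rank : ∀ m w, s.wmatch w = some m → ((P.M m).symm w : ℕ) + 1 = s.next m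
  proposed : ∀ m (r : Fin n), (r : ℕ) < s.next m → (m, P.M m r) ∈ s.props
  prop_holds : ∀ m w, (m, w) ∈ s.props → ∃ m', s.wmatch w = some m' ∧
      ((P.W w).symm m' : ℕ) ≤ ((P.W w).symm m : ℕ)
  opt : ∀ ν, Stable P ν → ∀ a w, (a, w) ∈ s.props → s.wmatch w ≠ some a → ν a ≠ w

lemma inv_mk {P : Profile n} {f : Fin n → ℕ} {g : Fin n → Option (Fin n)}
    {l : List (Fin n × Fin n)}
    (h1 : ∀ m, f m ≤ n)
    (h2 : ∀ m w, g w = some m → ((P.M m).symm w : ℕ) + 1 = f m)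
    (h3 : ∀ m (r : Fin n), (r : ℕ) < f m → (m, P.M m r) ∈ l)
    (h4 : ∀ m w, (m, w) ∈ l → ∃ m', g w = some m' ∧
      ((P.W w).symm m' : ℕ) ≤ ((P.W w).symm m : ℕ))
    (h5 : ∀ ν, Stable P ν → ∀ a w, (a, w) ∈ l → g w ≠ some a → ν a ≠ w) :
    Inv P ⟨f, g, l⟩ := ⟨h1, h2, h3, h4, h5⟩

lemma inv_init (P : Profile n) : Inv P (GSinit n) := by
  constructor <;> intros <;> simp_all [GSinit]

/-- If `m` is currently unmatched, a stable partner of `m` cannot be among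
the women he has already proposed to. -/
lemma no_better_unmatched {P : Profile n} {s : GSState n} (hs : Inv P s) {m : Fin n}
    (hum : ∀ u, s.wmatch u ≠ some m) {ν : Fin n → Fin n} (hν : Stable P ν)
    {u : Fin n} (h : ((P.M m).symm u : ℕ) < s.next m) : ν m ≠ u := by
  have hmem : (m, u) ∈ s.props := by
    have := hs.proposed m ((P.M m).symm u) h
    simpa using this
  exact hs.opt ν hν m u hmem (hum u)

/-- If `m` is currently matched to `w`, a stable partner of `m` cannot be among
the women he has already proposed to, other than `w`. -/
lemma no_better_matched {P : Profile n} {s : GSState n} (hs : Inv P s) {m w : Fin n}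
    (hmw : s.wmatch w = some m) {ν : Fin n → Fin n} (hν : Stable P ν)
    {u : Fin n} (hu : u ≠ w) (h : ((P.M m).symm u : ℕ) < s.next m) : ν m ≠ u := by
  have hmem : (m, u) ∈ s.props := by
    have := hs.proposed m ((P.M m).symm u) h
    simpa using this
  have hne : s.wmatch u ≠ some m := by
    intro hc
    have h1 := hs.matched_rank m u hc
    have h2 := hs.matched_rank m w hmw
    apply hu
    have hval : ((P.M m).symm u : ℕ) = ((P.M m).symm w : ℕ) := by omega
    exact (P.M m).symm.injective (Fin.val_injective hval)
  exact hs.opt ν hν m u hmem hne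

lemma inv_step (P : Profile n) (s : GSState n) (hs : Inv P s) : Inv P (GSstep P s) := by
  unfold GSstep
  split
  · exact hs
  next m hfind =>
    have hp := List.find?_some hfind
    simp only [Bool.and_eq_true, decide_eq_true_eq] at hp
    obtain ⟨hum', hlt⟩ := hp
    have hum : ∀ u, s.wmatch u ≠ some m := by
      simpa [isUnmatched] using hum'
    rw [dif_pos hlt]
    dsimp only
    have hrw : ((P.M m).symm (P.M m ⟨s.next m, hlt⟩) : ℕ) = s.next m := by
      rw [Equiv.symm_apply_apply]
    set w := P.M m ⟨s.next m, hlt⟩ with hwdef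
    -- facts used in all branches
    have hnext_le : ∀ a, (Function.update s.next m (s.next m + 1)) a ≤ n := by
      intro a
      rcases eq_or_ne a m with rfl | hne
      · simp only [Function.update_self]; omega
      · rw [Function.update_of_ne hne]; exact hs.next_le a
    have hproposed : ∀ (a : Fin n) (r : Fin n),
        (r : ℕ) < (Function.update s.next m (s.next m + 1)) a →
        (a, P.M a r) ∈ (m, w) :: s.props := by
      intro a r hr
      rcases eq_or_ne a m with rfl | hne
      · rw [Function.update_self] at hr
        rcases Nat.lt_or_ge (r : ℕ) (s.next a) with h | h
        · exact List.mem_cons_of_mem _ (hs.proposed a r h)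
        · have hre : (r : ℕ) = s.next a := by omega
          have : r = ⟨s.next a, hlt⟩ := Fin.ext hre
          subst this
          exact List.mem_cons_self
      · rw [Function.update_of_ne hne] at hr
        exact List.mem_cons_of_mem _ (hs.proposed a r hr)
    rcases hwm : s.wmatch w with _ | m'
    -- Case A : woman w unmatched, accepts m
    · dsimp only
      refine inv_mk hnext_le ?_ hproposed ?_ ?_
      · intro a u h
        rcases eq_or_ne u w with rfl | hne
        · rw [Function.update_self] at h
          injection h with h; subst h
          rw [Function.update_self, hrw]
        · rw [Function.update_of_ne hne] at h
          have ham : a ≠ m := fun hc => hum u (hc ▸ h)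
          rw [Function.update_of_ne ham]
          exact hs.matched_rank a u h
      · intro a u h
        rcases List.mem_cons.1 h with h | h
        · injection h with h1 h2; subst h1; subst h2
          exact ⟨a, by rw [Function.update_self], le_refl _⟩
        · obtain ⟨m', hm', hle⟩ := hs.prop_holds a u h
          rcases eq_or_ne u w with rfl | hne
          · rw [hwm] at hm'; exact absurd hm' (by simp)
          · exact ⟨m', by rw [Function.update_of_ne hne]; exact hm', hle⟩
      · intro ν hν a u h hne
        rcases List.mem_cons.1 h with h | h
        · injection h with h1 h2; subst h1; subst h2
          exact absurd (Function.update_self _ _ _) hne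
        · rcases eq_or_ne u w with rfl | hne'
          · exact hs.opt ν hν a w h (by rw [hwm]; simp)
          · rw [Function.update_of_ne hne'] at hne
            exact hs.opt ν hν a u h hne
    · dsimp only
      have hm'm : m' ≠ m := fun hc => hum w (hc ▸ hwm)
      split
      -- Case B : woman w matched to m', prefers m, accepts m
      next hpref =>
        refine inv_mk hnext_le ?_ hproposed ?_ ?_
        · intro a u h
          rcases eq_or_ne u w with rfl | hne
          · rw [Function.update_self] at h
            injection h with h; subst h
            rw [Function.update_self, hrw]
          · rw [Function.update_of_ne hne] at h
            have ham : a ≠ m := fun hc => hum u (hc ▸ h)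
            rw [Function.update_of_ne ham]
            exact hs.matched_rank a u h
        · intro a u h
          rcases List.mem_cons.1 h with h | h
          · injection h with h1 h2; subst h1; subst h2
            exact ⟨a, by rw [Function.update_self], le_refl _⟩
          · obtain ⟨m'', hm'', hle⟩ := hs.prop_holds a u h
            rcases eq_or_ne u w with rfl | hne
            · refine ⟨m, by rw [Function.update_self], ?_⟩
              rw [hwm] at hm''; injection hm'' with hm''; subst hm''
              have hlt' : ((P.W w).symm m : ℕ) < ((P.W w).symm m' : ℕ) := hpref
              omega
            · exact ⟨m'', by rw [Function.update_of_ne hne]; exact hm'', hle⟩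
        · intro ν hν a u h hne
          rcases List.mem_cons.1 h with h | h
          · injection h with h1 h2; subst h1; subst h2
            exact absurd (Function.update_self _ _ _) hne
          · rcases eq_or_ne u w with rfl | hne'
            · rcases eq_or_ne a m' with rfl | hne''
              · -- the displaced man a = m'; show ν a ≠ w
                intro hc
                obtain ⟨hbij, hnb⟩ := hν
                apply hnb m w
                refine ⟨?_, a, hc, hpref⟩
                -- P.mpref m w (ν m)
                have hνm : ν m ≠ w := fun hc' => hm'm (hbij.1 (hc.trans hc'.symm))
                have hge : ¬ ((P.M m).symm (ν m) : ℕ) < s.next m :=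
                  fun hlt' => (no_better_unmatched hs hum ⟨hbij, hnb⟩ hlt') rfl
                have hne3 : ((P.M m).symm (ν m) : ℕ) ≠ ((P.M m).symm w : ℕ) := by
                  intro hc'
                  exact hνm ((P.M m).symm.injective (Fin.val_injective hc'))
                show ((P.M m).symm w : ℕ) < ((P.M m).symm (ν m) : ℕ)
                omega
              · refine hs.opt ν hν a w h ?_
                rw [hwm]
                intro hc; injection hc with hc; exact hne'' hc.symm
            · rw [Function.update_of_ne hne'] at hne
              exact hs.opt ν hν a u h hne
      -- Case C : woman w matched to m', rejects m
      next hpref =>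
        have hple : ((P.W w).symm m' : ℕ) ≤ ((P.W w).symm m : ℕ) := by
          have := le_of_not_gt hpref
          exact this
        have hplt : (P.W w).symm m' < (P.W w).symm m := by
          have hne3 : ((P.W w).symm m' : ℕ) ≠ ((P.W w).symm m : ℕ) := by
            intro hc
            exact hm'm ((P.W w).symm.injective (Fin.val_injective hc))
          show ((P.W w).symm m' : ℕ) < ((P.W w).symm m : ℕ)
          omega
        refine inv_mk hnext_le ?_ hproposed ?_ ?_
        · intro a u h
          have ham : a ≠ m := fun hc => hum u (hc ▸ h)
          rw [Function.update_of_ne ham]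
          exact hs.matched_rank a u h
        · intro a u h
          rcases List.mem_cons.1 h with h | h
          · injection h with h1 h2; subst h1; subst h2
            exact ⟨m', hwm, hple⟩
          · exact hs.prop_holds a u h
        · intro ν hν a u h hneq
          rcases List.mem_cons.1 h with h | h
          · injection h with h1 h2; subst h1; subst h2
            -- new rejection : a = m rejected by w; show ν a ≠ w
            intro hc
            obtain ⟨hbij, hnb⟩ := hν
            apply hnb m' w
            refine ⟨?_, a, hc, hplt⟩
            -- P.mpref m' w (ν m')
            have hνm' : ν m' ≠ w := fun hc' => hm'm (hbij.1 (hc'.trans hc.symm))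
            have hrk : ((P.M m').symm w : ℕ) + 1 = s.next m' := hs.matched_rank m' w hwm
            have hge : ¬ ((P.M m').symm (ν m') : ℕ) < s.next m' :=
              fun hlt' => (no_better_matched hs hwm ⟨hbij, hnb⟩ hνm' hlt') rfl
            show ((P.M m').symm w : ℕ) < ((P.M m').symm (ν m') : ℕ)
            omega
          · exact hs.opt ν hν a u h hneq

/-- Sum-of-next potential function. -/
def Phi (s : GSState n) : ℕ := ∑ a : Fin n, s.next a

lemma step_phi (P : Profile n) (s : GSState n) :
    GSstep P s = s ∨ Phi (GSstep P s) = Phi s + 1 := by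
  unfold GSstep
  split
  · exact Or.inl rfl
  next m hfind =>
    right
    have hp := List.find?_some hfind
    simp only [Bool.and_eq_true, decide_eq_true_eq] at hp
    rw [dif_pos hp.2]
    dsimp only
    have key : ∀ (g : Fin n → Option (Fin n)) (l : List (Fin n × Fin n)),
        Phi (⟨Function.update s.next m (s.next m + 1), g, l⟩ : GSState n) = Phi s + 1 := by
      intro g l
      unfold Phi
      dsimp only
      rw [Finset.sum_update_of_mem (Finset.mem_univ m)]
      rw [← Finset.add_sum_erase Finset.univ s.next (Finset.mem_univ m), Finset.erase_eq]
      omega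
    rcases hwm : s.wmatch (P.M m ⟨s.next m, hp.2⟩) with _ | m'
    · exact key _ _
    · dsimp only
      split
      · exact key _ _
      · exact key _ _

lemma phi_le {P : Profile n} {s : GSState n} (hs : Inv P s) : Phi s ≤ n * n := by
  calc Phi s ≤ ∑ _a : Fin n, n := Finset.sum_le_sum (fun a _ => hs.next_le a)
    _ = n * n := by simp [Finset.sum_const, Finset.card_univ, Nat.mul_comm]

lemma inv_iter (P : Profile n) (k : ℕ) : Inv P ((GSstep P)^[k] (GSinit n)) := by
  induction k with
  | zero => exact inv_init P
  | succ k ih => rw [Function.iterate_succ_apply']; exact inv_step P _ ih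

lemma inv_run (P : Profile n) : Inv P (GSrun P) := inv_iter P (n * n + 1)

lemma run_fixed (P : Profile n) : GSstep P (GSrun P) = GSrun P := by
  have main : ∀ k : ℕ,
      (∃ j, j ≤ k ∧ GSstep P ((GSstep P)^[j] (GSinit n)) = (GSstep P)^[j] (GSinit n)) ∨
        k ≤ Phi ((GSstep P)^[k] (GSinit n)) := by
    intro k
    induction k with
    | zero => exact Or.inr (Nat.zero_le _)
    | succ k ih =>
      rcases ih with ⟨j, hj, hfix⟩ | hle
      · exact Or.inl ⟨j, Nat.le_succ_of_le hj, hfix⟩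
      · rcases step_phi P ((GSstep P)^[k] (GSinit n)) with hfix | hphi
        · exact Or.inl ⟨k, Nat.le_succ k, hfix⟩
        · right
          rw [Function.iterate_succ_apply', hphi]
          omega
  rcases main (n * n + 1) with ⟨j, hj, hfix⟩ | hle
  · have hrun : GSrun P = (GSstep P)^[j] (GSinit n) := by
      unfold GSrun
      have heq : n * n + 1 = (n * n + 1 - j) + j := by omega
      rw [heq, Function.iterate_add_apply, Function.iterate_fixed hfix]
    rw [hrun]
    exact hfix
  · exfalso
    have := phi_le (inv_iter P (n * n + 1))
    omega

lemma fixed_find_none {P : Profile n} {s : GSState n} (hfix : GSstep P s = s)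
    (m : Fin n) : ¬ (isUnmatched s m = true ∧ s.next m < n) := by
  rintro ⟨h1, h2⟩
  have hex : ∃ m', (List.finRange n).find?
      (fun a => isUnmatched s a && decide (s.next a < n)) = some m' := by
    cases hf : (List.finRange n).find?
        (fun a => isUnmatched s a && decide (s.next a < n)) with
    | none =>
      exfalso
      have := List.find?_eq_none.1 hf m (List.mem_finRange m)
      simp only [Bool.and_eq_true, decide_eq_true_eq] at this
      exact this ⟨h1, h2⟩
    | some m' => exact ⟨m', rfl⟩
  obtain ⟨m', hf⟩ := hex
  have hp := List.find?_some hf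
  simp only [Bool.and_eq_true, decide_eq_true_eq] at hp
  have hlen : (GSstep P s).props.length = s.props.length + 1 := by
    unfold GSstep
    rw [hf]
    show (if h : s.next m' < n then _ else s).props.length = _
    rw [dif_pos hp.2]
    dsimp only
    rcases hwm : s.wmatch (P.M m' ⟨s.next m', hp.2⟩) with _ | m''
    · rfl
    · dsimp only
      split
      · rfl
      · rfl
  rw [hfix] at hlen
  omega

lemma run_all_matched (P : Profile n) (m : Fin n) :
    ∃ u, (GSrun P).wmatch u = some m := by
  by_contra hcon
  push_neg at hcon
  have hs := inv_run P
  have hfix := run_fixed P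
  set s := GSrun P
  have hun : isUnmatched s m = true := by
    simp only [isUnmatched, decide_eq_true_eq]
    exact hcon
  have hnlt : ¬ s.next m < n := fun hlt => fixed_find_none hfix m ⟨hun, hlt⟩
  have hnm : s.next m = n := by
    have := hs.next_le m
    omega
  have hg : ∀ u : Fin n, ∃ a, s.wmatch u = some a := by
    intro u
    have hr : ((P.M m).symm u : ℕ) < s.next m := by
      rw [hnm]
      exact ((P.M m).symm u).isLt
    have hmem : (m, u) ∈ s.props := by
      have := hs.proposed m ((P.M m).symm u) hr
      simpa using this
    obtain ⟨a, ha, _⟩ := hs.prop_holds m u hmem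
    exact ⟨a, ha⟩
  choose g hgspec using hg
  have hginj : Function.Injective g := by
    intro u1 u2 he
    have h1 := hs.matched_rank (g u1) u1 (hgspec u1)
    have h2 := hs.matched_rank (g u2) u2 (hgspec u2)
    rw [he] at h1
    have hval : ((P.M (g u2)).symm u1 : ℕ) = ((P.M (g u2)).symm u2 : ℕ) := by omega
    exact (P.M (g u2)).symm.injective (Fin.val_injective hval)
  obtain ⟨u, hu⟩ := (Finite.injective_iff_surjective.mp hginj) m
  exact hcon u (hu ▸ hgspec u)

lemma DA_wmatch (P : Profile n) (m : Fin n) :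
    (GSrun P).wmatch (DA P m) = some m := by
  have h := run_all_matched P m
  unfold DA
  rw [dif_pos h]
  exact h.choose_spec

lemma DA_injective (P : Profile n) : Function.Injective (DA P) := by
  intro a b h
  have h1 := DA_wmatch P a
  rw [h, DA_wmatch P b] at h1
  injection h1 with h1
  exact h1.symm

lemma DA_bijective (P : Profile n) : Function.Bijective (DA P) :=
  (Finite.injective_iff_bijective).mp (DA_injective P)

lemma DA_stable (P : Profile n) : Stable P (DA P) := by
  refine ⟨DA_bijective P, ?_⟩
  rintro a u ⟨h1, m'', h2, h3⟩
  have hs := inv_run P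
  have hnx := hs.matched_rank a _ (DA_wmatch P a)
  have h1' : ((P.M a).symm u : ℕ) < ((P.M a).symm (DA P a) : ℕ) := h1
  have hr : ((P.M a).symm u : ℕ) < (GSrun P).next a := by omega
  have hmem : (a, u) ∈ (GSrun P).props := by
    have := hs.proposed a ((P.M a).symm u) hr
    simpa using this
  obtain ⟨b, hb, hble⟩ := hs.prop_holds a u hmem
  have hbm : (GSrun P).wmatch u = some m'' := h2 ▸ DA_wmatch P m''
  rw [hbm] at hb
  injection hb with hb
  subst hb
  have h3' : ((P.W u).symm a : ℕ) < ((P.W u).symm m'' : ℕ) := h3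
  omega

lemma DA_optimal (P : Profile n) {ν : Fin n → Fin n} (hν : Stable P ν) (a : Fin n) :
    ¬ P.mpref a (ν a) (DA P a) := by
  intro h
  have hs := inv_run P
  have hnx := hs.matched_rank a _ (DA_wmatch P a)
  have h' : ((P.M a).symm (ν a) : ℕ) < ((P.M a).symm (DA P a) : ℕ) := h
  have hr : ((P.M a).symm (ν a) : ℕ) < (GSrun P).next a := by omega
  have hne : ν a ≠ DA P a := by
    intro hc
    rw [hc] at h'
    omega
  exact no_better_matched hs (DA_wmatch P a) hν hne hr rfl

end GSProof
theorem strict_pushUp_two_better_two_worse (n : ℕ) (P : Profile n) (m : Fin n)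
    (X : Set (Fin n)) (hX : X ⊆ Below (P.M m) (DA P m))
    (e' : Fin n ≃ Fin n) (hpu : PushUp P m X e')
    (hnr : DA (P.updateM m e') m = DA P m)
    (hne : DA (P.updateM m e') ≠ DA P) :
    (∃ w₁ w₂ : Fin n, w₁ ≠ w₂ ∧
      (∃ a b : Fin n, DA (P.updateM m e') a = w₁ ∧ DA P b = w₁ ∧ P.wpref w₁ a b) ∧
      (∃ a b : Fin n, DA (P.updateM m e') a = w₂ ∧ DA P b = w₂ ∧ P.wpref w₂ a b)) ∧
    (∃ m₁ m₂ : Fin n, m₁ ≠ m₂ ∧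
      P.mpref m₁ (DA P m₁) (DA (P.updateM m e') m₁) ∧
      P.mpref m₂ (DA P m₂) (DA (P.updateM m e') m₂)) := by
  classical
  have hstab : Stable P (DA P) := GSProof.DA_stable P
  have hstab' : Stable (P.updateM m e') (DA (P.updateM m e')) :=
    GSProof.DA_stable (P.updateM m e')
  set P' := P.updateM m e' with hP'
  set μ := DA P with hμ
  set μ' := DA P' with hμ'
  have hMm : P'.M m = e' := by
    rw [hP']
    exact Function.update_self m e' P.M
  have hMne : ∀ a, a ≠ m → P'.M a = P.M a := by
    intro a ha
    rw [hP']
    exact Function.update_of_ne ha e' P.M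
  have hW : P'.W = P.W := rfl
  -- μ' is stable with respect to the true profile P
  have hpu' : Above e' (DA P m) = Above (P.M m) (DA P m) ∪ X := by
    have := hpu
    unfold PushUp PushUpDown at this
    rwa [Set.diff_empty] at this
  have hstabP : Stable P μ' := by
    refine ⟨hstab'.1, ?_⟩
    rintro a u ⟨h1, b, hb, h3⟩
    rcases eq_or_ne a m with rfl | ha
    · apply hstab'.2 a u
      refine ⟨?_, b, hb, ?_⟩
      · -- P'.mpref a u (μ' a)
        show (P'.M a).symm u < (P'.M a).symm (μ' a)
        rw [hMm, hnr]
        rw [hnr] at h1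
        have hu : u ∈ Above (P.M a) (DA P a) := h1
        have hu' : u ∈ Above e' (DA P a) := by
          rw [hpu']
          exact Set.mem_union_left _ hu
        exact hu'
      · show (P'.W u).symm a < (P'.W u).symm b
        rw [hW]
        exact h3
    · apply hstab'.2 a u
      refine ⟨?_, b, hb, ?_⟩
      · show (P'.M a).symm u < (P'.M a).symm (μ' a)
        rw [hMne a ha]
        exact h1
      · show (P'.W u).symm a < (P'.W u).symm b
        rw [hW]
        exact h3
  -- every man weakly prefers μ, strictly if his partner changed
  have hworse : ∀ a, μ' a ≠ μ a → P.mpref a (μ a) (μ' a) := by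
    intro a hne2
    have h1 := GSProof.DA_optimal P hstabP a
    have h1' : ¬ ((P.M a).symm (μ' a) : ℕ) < ((P.M a).symm (μ a) : ℕ) := h1
    have hnev : ((P.M a).symm (μ a) : ℕ) ≠ ((P.M a).symm (μ' a) : ℕ) := by
      intro hc
      exact hne2 (((P.M a).symm.injective (Fin.val_injective hc)).symm)
    show ((P.M a).symm (μ a) : ℕ) < ((P.M a).symm (μ' a) : ℕ)
    omega
  obtain ⟨a0, ha0⟩ : ∃ a, μ' a ≠ μ a := Function.ne_iff.mp hne
  -- a second changed man
  obtain ⟨c, hc⟩ := hstab.1.2 (μ' a0)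
  have hca0 : c ≠ a0 := by
    intro h
    rw [h] at hc
    exact ha0 hc.symm
  have hcD : μ' c ≠ μ c := by
    intro h
    exact hca0 (hstab'.1.1 (h.trans hc))
  -- women married to changed men are strictly better off
  have hbetter : ∀ a, μ' a ≠ μ a →
      ∃ x y : Fin n, μ' x = μ' a ∧ μ y = μ' a ∧ P.wpref (μ' a) x y := by
    intro a hne2
    obtain ⟨b, hb⟩ := hstab.1.2 (μ' a)
    have hba : b ≠ a := by
      intro h
      rw [h] at hb
      exact hne2 hb.symm
    refine ⟨a, b, rfl, hb, ?_⟩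
    by_contra hnp
    have hnp' : ¬ ((P.W (μ' a)).symm a : ℕ) < ((P.W (μ' a)).symm b : ℕ) := hnp
    have hbD : μ' b ≠ μ b := by
      intro h
      exact hba (hstab'.1.1 (h.trans hb))
    have hmprefb := hworse b hbD
    apply hstabP.2 b (μ' a)
    refine ⟨?_, a, rfl, ?_⟩
    · rw [← hb]
      exact hmprefb
    · -- P.wpref (μ' a) b a
      have hneba : ((P.W (μ' a)).symm b : ℕ) ≠ ((P.W (μ' a)).symm a : ℕ) := by
        intro hcv
        exact hba ((P.W (μ' a)).symm.injective (Fin.val_injective hcv))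
      show ((P.W (μ' a)).symm b : ℕ) < ((P.W (μ' a)).symm a : ℕ)
      omega
  obtain ⟨x0, y0, hx0, hy0, hw0⟩ := hbetter a0 ha0
  obtain ⟨x1, y1, hx1, hy1, hw1⟩ := hbetter c hcD
  refine ⟨⟨μ' a0, μ' c, ?_, ⟨x0, y0, hx0, hy0, hw0⟩, ⟨x1, y1, hx1, hy1, hw1⟩⟩,
    a0, c, fun h => hca0 h.symm, hworse a0 ha0, hworse c hcD⟩
  intro h
  exact hca0 (hstab'.1.1 h.symm)
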